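/- Let d ≥ 1, η > 0, L ≥ 0, and take the scaling a = d. Let Q ⊆ ℝ^{d+1} be nonempty, closed and convex, let y ∈ ℝ^d, s ∈ ℝ, and set z = (y, s − dη). Let w* ∈ Q be the metric projection of z onto Q (so ‖w* − z‖ ≤ ‖w − z‖ for all w ∈ Q), and let w̃ ∈ ℝ^{d+1} satisfy ‖w̃ − w*‖ ≤ (1 + L/d)·√(2η/(d+1)). Define, for w ∈ ℝ^{d+1}, P₁(w) = (‖w − w̃‖² + ‖w̃ − z‖²)/(2η) − (√2·(L+d)/(d·√(η(d+1))))·(‖w − w̃‖ + ‖w̃ − z‖) − 6(L+d)²/(d²(d+1)) + d s − d²η/2. Then for every w = (x,t) ∈ Q one has P₁(w) ≤ d t + (1/(2η))·‖(x,t) − (y,s)‖²; that is, P₁ lies below the RGO potential Θ^{η,Q}_{y,s} everywhere, so the rejection-sampling acceptance ratio exp(−Θ^{η,Q}_{y,s}(w) + P₁(w)) is at most 1. -/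

import Mathlib

noncomputable def enorm2 {d : ℕ} (p : EuclideanSpace ℝ (Fin d) × ℝ) : ℝ :=
  Real.sqrt (‖p.1‖ ^ 2 + p.2 ^ 2)

private lemma aux_proj (θ nv I : ℝ) (hθ0 : 0 < θ) (hθ2 : θ ≤ I / nv ^ 2) (hnv : 0 < nv)
    (h3 : 2 * (θ * I) ≤ (θ * nv) ^ 2) (hcon : 0 < I) : False := by
  have h4 : θ * nv ^ 2 ≤ I := by
    have h := mul_le_mul_of_nonneg_right hθ2 (by positivity : (0:ℝ) ≤ nv ^ 2)
    rwa [div_mul_cancel₀] at h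
    positivity
  nlinarith

private lemma aux_quad (a b a' b' r ε E0 : ℝ) (hta : a ≤ a' + ε) (hta' : a' ≤ a + ε)
    (htb : b ≤ ε + b') (htb' : b' ≤ ε + b) (hp : b' ^ 2 + a' ^ 2 ≤ r ^ 2) (hεE : ε ≤ E0)
    (ha0 : 0 ≤ a) (hb0 : 0 ≤ b) (hε0 : 0 ≤ ε) (hE00 : 0 ≤ E0) :
    a ^ 2 + b ^ 2 ≤ r ^ 2 + 2 * E0 * (a + b) + 6 * E0 ^ 2 := by
  have h1 : a ^ 2 ≤ a' ^ 2 + 2 * ε * a + 3 * ε ^ 2 := by nlinarith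
  have h2 : b ^ 2 ≤ b' ^ 2 + 2 * ε * b + 3 * ε ^ 2 := by nlinarith
  nlinarith [mul_le_mul_of_nonneg_right hεE ha0, mul_le_mul_of_nonneg_right hεE hb0,
    mul_le_mul_of_nonneg_left hεE hε0, mul_le_mul_of_nonneg_left hεE hE00]

private lemma aux_final (a b r m c cK E0 K η dd t s : ℝ) (hη : 0 < η)
    (hmain : a ^ 2 + b ^ 2 ≤ r ^ 2 + 2 * E0 * (a + b) + 6 * E0 ^ 2)
    (hc : E0 / η ≤ c) (hK : 3 * E0 ^ 2 / η ≤ cK)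
    (hab : 0 ≤ a + b)
    (hr2 : r ^ 2 = m ^ 2 + 2 * dd * η * (t - s) + (dd * η) ^ 2) :
    (a ^ 2 + b ^ 2) / (2 * η) - c * (a + b) - cK + dd * s - dd ^ 2 * η / 2
      ≤ dd * t + (1 / (2 * η)) * m ^ 2 := by
  have hcab : (E0 / η) * (a + b) ≤ c * (a + b) := mul_le_mul_of_nonneg_right hc hab
  have hdiv : (a ^ 2 + b ^ 2) / (2 * η)
      ≤ r ^ 2 / (2 * η) + (E0 / η) * (a + b) + 3 * E0 ^ 2 / η := by
    have h1 : (a ^ 2 + b ^ 2) / (2 * η)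
        ≤ (r ^ 2 + 2 * E0 * (a + b) + 6 * E0 ^ 2) / (2 * η) := by
      gcongr
    calc (a ^ 2 + b ^ 2) / (2 * η) ≤ (r ^ 2 + 2 * E0 * (a + b) + 6 * E0 ^ 2) / (2 * η) := h1
      _ = r ^ 2 / (2 * η) + (E0 / η) * (a + b) + 3 * E0 ^ 2 / η := by field_simp; ring
  have hrEq : r ^ 2 / (2 * η) = m ^ 2 / (2 * η) + dd * (t - s) + dd ^ 2 * η / 2 := by
    rw [hr2]; field_simp
  have hm : (1 / (2 * η)) * m ^ 2 = m ^ 2 / (2 * η) := by ring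
  rw [hm]
  linarith

theorem stmt_12 {d : ℕ} (hd : 1 ≤ d) (η L : ℝ) (hη : 0 < η) (hL : 0 ≤ L)
    (Q : Set (EuclideanSpace ℝ (Fin d) × ℝ)) (hQne : Q.Nonempty) (hQcl : IsClosed Q)
    (hQconv : Convex ℝ Q)
    (y : EuclideanSpace ℝ (Fin d)) (s : ℝ)
    (z : EuclideanSpace ℝ (Fin d) × ℝ) (hz : z = (y, s - d * η))
    (ws : EuclideanSpace ℝ (Fin d) × ℝ) (hws : ws ∈ Q)
    (hproj : ∀ w ∈ Q, enorm2 (ws - z) ≤ enorm2 (w - z))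
    (wt : EuclideanSpace ℝ (Fin d) × ℝ)
    (hwt : enorm2 (wt - ws) ≤ (1 + L / d) * Real.sqrt (2 * η / (d + 1))) :
    ∀ w ∈ Q,
      (enorm2 (w - wt) ^ 2 + enorm2 (wt - z) ^ 2) / (2 * η)
          - (Real.sqrt 2 * (L + d) / (d * Real.sqrt (η * (d + 1))))
              * (enorm2 (w - wt) + enorm2 (wt - z))
          - 6 * (L + d) ^ 2 / (d ^ 2 * (d + 1))
          + d * s - d ^ 2 * η / 2
        ≤ d * w.2 + (1 / (2 * η)) * enorm2 (w - (y, s)) ^ 2 := by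
  intro w hw
  have hd0 : (0:ℝ) < d := by exact_mod_cast Nat.lt_of_lt_of_le Nat.zero_lt_one hd
  have hd1 : (0:ℝ) < (d:ℝ) + 1 := by linarith
  let f : (EuclideanSpace ℝ (Fin d) × ℝ) → WithLp 2 (EuclideanSpace ℝ (Fin d) × ℝ) :=
    fun p => (WithLp.equiv 2 _).symm p
  have hf : ∀ p, enorm2 p = ‖f p‖ := by
    intro p
    rw [enorm2, WithLp.prod_norm_eq_of_L2]
    simp [f, Real.norm_eq_abs, sq_abs]
    try rfl
  have hfsub : ∀ p q, f (p - q) = f p - f q := fun p q => rfl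
  have hfsmul : ∀ (c : ℝ) p, f (c • p) = c • f p := fun c p => rfl
  -- projection inequality
  have hkey : ∀ p ∈ Q, (inner ℝ (f z - f ws) (f p - f ws) : ℝ) ≤ 0 := by
    intro p hp
    by_contra hcon
    push_neg at hcon
    have hvn : 0 < ‖f p - f ws‖ := by
      rcases (norm_nonneg (f p - f ws)).lt_or_eq with h | h
      · exact h
      · exfalso
        have hz0 : f p - f ws = 0 := by rwa [eq_comm, norm_eq_zero] at h
        rw [hz0, inner_zero_right] at hcon
        exact lt_irrefl _ hcon
    set θ := min 1 ((inner ℝ (f z - f ws) (f p - f ws) : ℝ) / ‖f p - f ws‖ ^ 2) with hθ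
    have hθ0 : 0 < θ := lt_min one_pos (div_pos hcon (by positivity))
    have hθ1 : θ ≤ 1 := min_le_left _ _
    have hθ2 : θ ≤ (inner ℝ (f z - f ws) (f p - f ws) : ℝ) / ‖f p - f ws‖ ^ 2 :=
      min_le_right _ _
    have hmem : (1 - θ) • ws + θ • p ∈ Q :=
      hQconv hws hp (by linarith) hθ0.le (by ring)
    have h1 := hproj _ hmem
    rw [hf, hf] at h1
    have e1 : f (ws - z) = -(f z - f ws) := by rw [hfsub]; abel
    have e2 : f ((1 - θ) • ws + θ • p - z) = θ • (f p - f ws) - (f z - f ws) := by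
      have h : (1 - θ) • ws + θ • p - z = θ • (p - ws) - (z - ws) := by module
      rw [h, hfsub, hfsmul, hfsub, hfsub]
    rw [e1, e2, norm_neg] at h1
    have h2 : ‖f z - f ws‖ ^ 2 ≤ ‖θ • (f p - f ws) - (f z - f ws)‖ ^ 2 := by
      apply sq_le_sq' _ h1
      linarith [norm_nonneg (f z - f ws), norm_nonneg (θ • (f p - f ws) - (f z - f ws))]
    have hexp := norm_sub_sq_real (θ • (f p - f ws)) (f z - f ws)
    rw [real_inner_smul_left, norm_smul, Real.norm_eq_abs, abs_of_pos hθ0,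
      real_inner_comm (f z - f ws) (f p - f ws)] at hexp
    have h3 : 2 * (θ * (inner ℝ (f z - f ws) (f p - f ws) : ℝ))
        ≤ (θ * ‖f p - f ws‖) ^ 2 := by linarith [h2, hexp]
    exact aux_proj θ ‖f p - f ws‖ _ hθ0 hθ2 hvn h3 hcon
  -- Pythagoras
  have hpyth : ‖f ws - f z‖ ^ 2 + ‖f w - f ws‖ ^ 2 ≤ ‖f w - f z‖ ^ 2 := by
    have h := hkey w hw
    have e : f w - f z = (f w - f ws) - (f z - f ws) := by abel
    have expand := norm_sub_sq_real (f w - f ws) (f z - f ws)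
    have e2 : ‖f ws - f z‖ = ‖f z - f ws‖ := norm_sub_rev _ _
    rw [e, e2]
    linarith [expand, real_inner_comm (f z - f ws) (f w - f ws), h]
  -- triangle inequalities
  have tri : ∀ p q t : EuclideanSpace ℝ (Fin d) × ℝ,
      enorm2 (p - t) ≤ enorm2 (p - q) + enorm2 (q - t) := by
    intro p q t
    rw [hf, hf, hf, hfsub, hfsub, hfsub]
    have h := dist_triangle (f p) (f q) (f t)
    simpa [dist_eq_norm] using h
  have hswap : ∀ p q : EuclideanSpace ℝ (Fin d) × ℝ, enorm2 (p - q) = enorm2 (q - p) := by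
    intro p q
    rw [hf, hf, hfsub, hfsub]
    exact norm_sub_rev _ _
  have hta : enorm2 (w - wt) ≤ enorm2 (w - ws) + enorm2 (wt - ws) := by
    have h := tri w ws wt
    rw [hswap ws wt] at h
    linarith
  have hta' : enorm2 (w - ws) ≤ enorm2 (w - wt) + enorm2 (wt - ws) := tri w wt ws
  have htb : enorm2 (wt - z) ≤ enorm2 (wt - ws) + enorm2 (ws - z) := tri wt ws z
  have htb' : enorm2 (ws - z) ≤ enorm2 (wt - ws) + enorm2 (wt - z) := by
    have h := tri ws wt z
    rw [hswap ws wt] at h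
    linarith
  have hpyth' : enorm2 (ws - z) ^ 2 + enorm2 (w - ws) ^ 2 ≤ enorm2 (w - z) ^ 2 := by
    rw [hf (ws - z), hf (w - ws), hf (w - z), hfsub, hfsub, hfsub]
    exact hpyth
  have hE00 : 0 ≤ (1 + L / d) * Real.sqrt (2 * η / (d + 1)) := by
    apply mul_nonneg _ (Real.sqrt_nonneg _)
    have : 0 ≤ L / d := div_nonneg hL hd0.le
    linarith
  -- main quadratic estimate
  have hmain : enorm2 (w - wt) ^ 2 + enorm2 (wt - z) ^ 2
      ≤ enorm2 (w - z) ^ 2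
        + 2 * ((1 + L / d) * Real.sqrt (2 * η / (d + 1)))
            * (enorm2 (w - wt) + enorm2 (wt - z))
        + 6 * ((1 + L / d) * Real.sqrt (2 * η / (d + 1))) ^ 2 :=
    aux_quad _ _ _ _ _ _ _ hta hta' htb htb' hpyth' hwt
      (Real.sqrt_nonneg _) (Real.sqrt_nonneg _) (Real.sqrt_nonneg _) hE00
  -- relation between the two squared norms
  have hsq : ∀ q : EuclideanSpace ℝ (Fin d) × ℝ, enorm2 q ^ 2 = ‖q.1‖ ^ 2 + q.2 ^ 2 := by
    intro q; rw [enorm2, Real.sq_sqrt (by positivity)]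
  have hr2 : enorm2 (w - z) ^ 2
      = enorm2 (w - (y, s)) ^ 2 + 2 * d * η * (w.2 - s) + (d * η) ^ 2 := by
    rw [hsq, hsq, hz]
    simp only [Prod.fst_sub, Prod.snd_sub]
    ring
  -- constants
  have hc0 : 0 ≤ Real.sqrt 2 * (L + d) / (d * Real.sqrt (η * (d + 1))) := by
    apply div_nonneg (mul_nonneg (Real.sqrt_nonneg _) (by linarith))
    exact mul_nonneg hd0.le (Real.sqrt_nonneg _)
  have hE0sq : ((1 + L / d) * Real.sqrt (2 * η / (d + 1))) ^ 2
      = (1 + L / d) ^ 2 * (2 * η / (d + 1)) := by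
    rw [mul_pow, Real.sq_sqrt (by positivity)]
  have hcsq : (Real.sqrt 2 * (L + d) / (d * Real.sqrt (η * (d + 1)))) ^ 2
      = 2 * (L + d) ^ 2 / (d ^ 2 * (η * (d + 1))) := by
    rw [div_pow, mul_pow, mul_pow, Real.sq_sqrt (by norm_num : (0:ℝ) ≤ 2),
      Real.sq_sqrt (by positivity)]
  have hc : (1 + L / d) * Real.sqrt (2 * η / (d + 1)) / η
      ≤ Real.sqrt 2 * (L + d) / (d * Real.sqrt (η * (d + 1))) := by
    have hsqle : ((1 + L / d) * Real.sqrt (2 * η / (d + 1)) / η) ^ 2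
        ≤ (Real.sqrt 2 * (L + d) / (d * Real.sqrt (η * (d + 1)))) ^ 2 := by
      rw [div_pow, hE0sq, hcsq]
      apply le_of_eq
      have h1 := hd0.ne'
      have h2 := hη.ne'
      have h3 := hd1.ne'
      field_simp
      ring
    have h1 := Real.sqrt_le_sqrt hsqle
    rwa [Real.sqrt_sq (by positivity), Real.sqrt_sq hc0] at h1
  have hK : 3 * ((1 + L / d) * Real.sqrt (2 * η / (d + 1))) ^ 2 / η
      ≤ 6 * (L + d) ^ 2 / (d ^ 2 * (d + 1)) := by
    rw [hE0sq]
    apply le_of_eq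
    have h1 := hd0.ne'
    have h2 := hη.ne'
    have h3 := hd1.ne'
    field_simp
    ring
  have hab : 0 ≤ enorm2 (w - wt) + enorm2 (wt - z) :=
    add_nonneg (Real.sqrt_nonneg _) (Real.sqrt_nonneg _)
  exact aux_final (enorm2 (w - wt)) (enorm2 (wt - z)) (enorm2 (w - z)) (enorm2 (w - (y, s)))
    (Real.sqrt 2 * (L + d) / (d * Real.sqrt (η * (d + 1))))
    (6 * (L + d) ^ 2 / (d ^ 2 * (d + 1)))
    ((1 + L / d) * Real.sqrt (2 * η / (d + 1)))
    (6 * (L + d) ^ 2 / (d ^ 2 * (d + 1))) η d w.2 s hη hmain hc hK hab hr2
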